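/- Consider a limit order book with constant density (ask price s* > 0, density ρ⁺ > 0) and a Tobin tax with rates r_m, r_l < 1 on market and limit orders respectively, overall rate R := (1+r_m)/(1−r_l) − 1 satisfying 0 ≤ R < 1. The fast trader's after-tax profit from front-running with x stocks is π(x) = (1−r_l)·x·D⁺(x) − (1+r_m)·H⁺(x). Set y_min := 2·(R/(1−R))·s*·ρ⁺. Then: (i) if the slow trader buys y with 0 ≤ y ≤ y_min, then π(x) ≤ 0 = π(0) for all x ∈ [0,y], so the fast trader's profit is maximised by not trading; (ii) if y > y_min, then π(x) ≤ π(y) for all x ∈ [0,y] and π(y) > 0, so her profit is maximised by trading x = y. -/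

import Mathlib

/-- Tobin tax: if the slow trader's trade `y` is at most `y_min = 2·(R/(1−R))·s*·ρ⁺`,
the fast trader's after-tax profit is maximised by not trading; otherwise it is
maximised by trading `x = y`, as if the tax were absent. -/
theorem stmt_8 (sa ρp rm rl R ymin : ℝ) (hsa : 0 < sa) (hρp : 0 < ρp)
    (hrm : rm < 1) (hrl : rl < 1)
    (hR : R = (1 + rm) / (1 - rl) - 1) (hR0 : 0 ≤ R) (hR1 : R < 1)
    (Hp Dp π : ℝ → ℝ)
    (hHp : ∀ x, Hp x = sa * x + x ^ 2 / (2 * ρp))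
    (hDp : ∀ x, Dp x = sa + x / ρp)
    (hπ : ∀ x, π x = (1 - rl) * x * Dp x - (1 + rm) * Hp x)
    (hymin : ymin = 2 * (R / (1 - R)) * sa * ρp) :
    (∀ y, 0 ≤ y → y ≤ ymin → ∀ x ∈ Set.Icc 0 y, π x ≤ 0) ∧ π 0 = 0 ∧
      (∀ y, ymin < y → (∀ x ∈ Set.Icc 0 y, π x ≤ π y) ∧ 0 < π y) := by
  have hrl' : (0:ℝ) < 1 - rl := by linarith
  have hR1' : (0:ℝ) < 1 - R := by linarith
  have hb : 1 + rm = (1 - rl) * (1 + R) := by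
    rw [hR]; field_simp; ring
  have hymin0 : 0 ≤ ymin := by
    rw [hymin]
    positivity
  set c : ℝ := (1 - rl) * (1 - R) / (2 * ρp) with hc
  have hcpos : 0 < c := by positivity
  have key : ∀ x, π x = c * (x * (x - ymin)) := by
    intro x
    rw [hπ, hHp, hDp, hb, hymin, hc]
    field_simp
    ring
  refine ⟨?_, ?_, ?_⟩
  · intro y hy0 hyle x hx
    obtain ⟨hx0, hxy⟩ := hx
    rw [key]
    have h1 : x * (x - ymin) ≤ 0 :=
      mul_nonpos_of_nonneg_of_nonpos hx0 (by linarith)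
    exact mul_nonpos_of_nonneg_of_nonpos hcpos.le h1
  · rw [key]; ring
  · intro y hy
    constructor
    · intro x hx
      obtain ⟨hx0, hxy⟩ := hx
      rw [key, key]
      have h1 : 0 ≤ y - x := by linarith
      have h2 : 0 < x + y - ymin := by linarith
      have h3 : x * (x - ymin) ≤ y * (y - ymin) := by nlinarith
      exact mul_le_mul_of_nonneg_left h3 hcpos.le
    · rw [key]
      have hy0 : 0 < y := lt_of_le_of_lt hymin0 hy
      exact mul_pos hcpos (mul_pos hy0 (by linarith))
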